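/- arXiv:1908.09961 — 3 statements merged into one kernel-verified Lean document; each statement's English description precedes it below -/
import Mathlib

section
/- Let X and Z be finite types, let p : X → ℝ be a probability mass function on X, and let q₁, q₂ : X → Z → ℝ be two conditional probability mass functions (so q₁(x,·) and q₂(x,·) are probability mass functions on Z for every x). For a conditional pmf q define the mutual information I[q] = ∑_{x∈X} ∑_{z∈Z} p(x) q(x,z) log( q(x,z) / (∑_{x'∈X} p(x') q(x',z)) ) (with the convention 0·log(·) = 0). Then for every λ ∈ [0,1], the mixture q⋆ defined by q⋆(x,z) = λ q₁(x,z) + (1−λ) q₂(x,z) satisfies I[q⋆] ≤ λ I[q₁] + (1−λ) I[q₂]; that is, mutual information I(X,Z) is a convex function of the conditional distribution p(z|x). -/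
open Finset

/-- Two-term log-sum inequality. -/
lemma log_sum_two (a b c d : ℝ) (ha : 0 ≤ a) (hb : 0 ≤ b) (hc : 0 ≤ c) (hd : 0 ≤ d)
    (hac : a = 0 ∨ 0 < c) (hbd : b = 0 ∨ 0 < d) :
    (a + b) * Real.log ((a + b) / (c + d)) ≤ a * Real.log (a / c) + b * Real.log (b / d) := by
  rcases eq_or_lt_of_le ha with ha0 | hapos
  · rcases eq_or_lt_of_le hb with hb0 | hbpos
    · simp [← ha0, ← hb0]
    · have hdpos : 0 < d := by
        rcases hbd with hb0 | hdpos
        · exact absurd hb0 hbpos.ne'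
        · exact hdpos
      have h2 : Real.log (b / (c + d)) ≤ Real.log (b / d) := by
        rcases eq_or_lt_of_le hc with hc0 | hcpos
        · rw [← hc0, zero_add]
        · exact Real.log_le_log (by positivity) (by gcongr; linarith)
      simp only [← ha0, zero_add, zero_mul]
      exact mul_le_mul_of_nonneg_left h2 hb
  · have hcpos : 0 < c := by
      rcases hac with ha0 | hcpos
      · exact absurd ha0 hapos.ne'
      · exact hcpos
    rcases eq_or_lt_of_le hb with hb0 | hbpos
    · have h2 : Real.log (a / (c + d)) ≤ Real.log (a / c) := by
        rcases eq_or_lt_of_le hd with hd0 | hdpos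
        · rw [← hd0, add_zero]
        · exact Real.log_le_log (by positivity) (by gcongr; linarith)
      simp only [← hb0, add_zero, zero_mul]
      exact mul_le_mul_of_nonneg_left h2 ha
    · have hdpos : 0 < d := by
        rcases hbd with hb0 | hdpos
        · exact absurd hb0 hbpos.ne'
        · exact hdpos
      have hcd : 0 < c + d := by linarith
      have hab : 0 < a + b := by linarith
      have hu : (0:ℝ) < ((a + b) / (c + d)) / (a / c) := by positivity
      have hv : (0:ℝ) < ((a + b) / (c + d)) / (b / d) := by positivity
      have h1 := Real.log_le_sub_one_of_pos hu
      have h2 := Real.log_le_sub_one_of_pos hv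
      rw [Real.log_div (by positivity) (by positivity)] at h1 h2
      have h1' := mul_le_mul_of_nonneg_left h1 hapos.le
      have h2' := mul_le_mul_of_nonneg_left h2 hbpos.le
      have e1 : a * (((a + b) / (c + d)) / (a / c) - 1) = (a + b) * c / (c + d) - a := by
        field_simp
      have e2 : b * (((a + b) / (c + d)) / (b / d) - 1) = (a + b) * d / (c + d) - b := by
        field_simp
      rw [e1] at h1'
      rw [e2] at h2'
      have e3 : (a + b) * c / (c + d) - a + ((a + b) * d / (c + d) - b) = 0 := by
        field_simp; ring
      nlinarith [h1', h2']

lemma scale_log (l u v : ℝ) (hl : 0 ≤ l) :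
    (l * u) * Real.log ((l * u) / (l * v)) = l * (u * Real.log (u / v)) := by
  rcases eq_or_lt_of_le hl with h | h
  · simp [← h]
  · rw [mul_div_mul_left _ _ h.ne']; ring

/-- The marginal of `Z` induced by the pmf `p` on `X` and the conditional pmf `q`. -/
noncomputable def marginal {X Z : Type*} [Fintype X] [Fintype Z]
    (p : X → ℝ) (q : X → Z → ℝ) (z : Z) : ℝ :=
  ∑ x, p x * q x z

/-- Mutual information `I(X,Z)` as a functional of the conditional pmf `q`,
with the convention `0 · log(·) = 0` (note `Real.log 0 = 0`). -/
noncomputable def mutualInfoOfCond {X Z : Type*} [Fintype X] [Fintype Z]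
    (p : X → ℝ) (q : X → Z → ℝ) : ℝ :=
  ∑ x, ∑ z, p x * q x z * Real.log (q x z / marginal p q z)

/-- Mutual information `I(X,Z)` is a convex function of the conditional
distribution `q(z|x)`. -/
theorem mutualInfo_convex_in_conditional
    {X Z : Type*} [Fintype X] [Fintype Z]
    (p : X → ℝ) (hp : ∀ x, 0 ≤ p x) (hpsum : ∑ x, p x = 1)
    (q₁ q₂ : X → Z → ℝ)
    (hq₁ : ∀ x z, 0 ≤ q₁ x z) (hq₁sum : ∀ x, ∑ z, q₁ x z = 1)
    (hq₂ : ∀ x z, 0 ≤ q₂ x z) (hq₂sum : ∀ x, ∑ z, q₂ x z = 1)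
    (l : ℝ) (hl0 : 0 ≤ l) (hl1 : l ≤ 1) :
    mutualInfoOfCond p (fun x z => l * q₁ x z + (1 - l) * q₂ x z)
      ≤ l * mutualInfoOfCond p q₁ + (1 - l) * mutualInfoOfCond p q₂ := by
  have h1l : (0:ℝ) ≤ 1 - l := by linarith
  have hm1 : ∀ z, 0 ≤ marginal p q₁ z :=
    fun z => Finset.sum_nonneg fun x _ => mul_nonneg (hp x) (hq₁ x z)
  have hm2 : ∀ z, 0 ≤ marginal p q₂ z :=
    fun z => Finset.sum_nonneg fun x _ => mul_nonneg (hp x) (hq₂ x z)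
  have hmarg : ∀ z, marginal p (fun x z => l * q₁ x z + (1 - l) * q₂ x z) z
      = l * marginal p q₁ z + (1 - l) * marginal p q₂ z := by
    intro z
    simp only [marginal, mul_add, Finset.mul_sum]
    rw [← Finset.sum_add_distrib]
    exact Finset.sum_congr rfl fun x _ => by ring
  simp only [mutualInfoOfCond, Finset.mul_sum]
  rw [← Finset.sum_add_distrib]
  apply Finset.sum_le_sum
  intro x _
  rw [← Finset.sum_add_distrib]
  apply Finset.sum_le_sum
  intro z _
  by_cases hpx : p x = 0
  · simp [hpx]
  · have hpx' : 0 < p x := lt_of_le_of_ne (hp x) (Ne.symm hpx)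
    have hac : l * q₁ x z = 0 ∨ 0 < l * marginal p q₁ z := by
      rcases eq_or_lt_of_le hl0 with h | h
      · exact Or.inl (by rw [← h, zero_mul])
      by_cases hq : q₁ x z = 0
      · exact Or.inl (by rw [hq, mul_zero])
      · have hq' : 0 < q₁ x z := lt_of_le_of_ne (hq₁ x z) (Ne.symm hq)
        have hle : p x * q₁ x z ≤ marginal p q₁ z :=
          Finset.single_le_sum (f := fun i => p i * q₁ i z)
            (fun i _ => mul_nonneg (hp i) (hq₁ i z)) (Finset.mem_univ x)
        exact Or.inr (mul_pos h (lt_of_lt_of_le (mul_pos hpx' hq') hle))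
    have hbd : (1 - l) * q₂ x z = 0 ∨ 0 < (1 - l) * marginal p q₂ z := by
      rcases eq_or_lt_of_le h1l with h | h
      · exact Or.inl (by rw [← h, zero_mul])
      by_cases hq : q₂ x z = 0
      · exact Or.inl (by rw [hq, mul_zero])
      · have hq' : 0 < q₂ x z := lt_of_le_of_ne (hq₂ x z) (Ne.symm hq)
        have hle : p x * q₂ x z ≤ marginal p q₂ z :=
          Finset.single_le_sum (f := fun i => p i * q₂ i z)
            (fun i _ => mul_nonneg (hp i) (hq₂ i z)) (Finset.mem_univ x)
        exact Or.inr (mul_pos h (lt_of_lt_of_le (mul_pos hpx' hq') hle))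
    have key := log_sum_two (l * q₁ x z) ((1 - l) * q₂ x z)
      (l * marginal p q₁ z) ((1 - l) * marginal p q₂ z)
      (mul_nonneg hl0 (hq₁ x z)) (mul_nonneg h1l (hq₂ x z))
      (mul_nonneg hl0 (hm1 z)) (mul_nonneg h1l (hm2 z)) hac hbd
    calc p x * (l * q₁ x z + (1 - l) * q₂ x z) *
          Real.log ((l * q₁ x z + (1 - l) * q₂ x z) /
            marginal p (fun x z => l * q₁ x z + (1 - l) * q₂ x z) z)
        = p x * ((l * q₁ x z + (1 - l) * q₂ x z) *
            Real.log ((l * q₁ x z + (1 - l) * q₂ x z) /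
              (l * marginal p q₁ z + (1 - l) * marginal p q₂ z))) := by
          rw [hmarg z]; ring
      _ ≤ p x * ((l * q₁ x z) * Real.log ((l * q₁ x z) / (l * marginal p q₁ z)) +
            ((1 - l) * q₂ x z) *
              Real.log (((1 - l) * q₂ x z) / ((1 - l) * marginal p q₂ z))) :=
          mul_le_mul_of_nonneg_left key (hp x)
      _ = l * (p x * q₁ x z * Real.log (q₁ x z / marginal p q₁ z)) +
          (1 - l) * (p x * q₂ x z * Real.log (q₂ x z / marginal p q₂ z)) := by
          rw [scale_log l (q₁ x z) (marginal p q₁ z) hl0,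
            scale_log (1 - l) (q₂ x z) (marginal p q₂ z) h1l]
          ring
end

section
/- Let Y, Z, Z' be random variables taking values in finite types, defined on a common probability space with a joint probability mass function, where Z takes values in a finite type of cardinality N ≥ 1, and suppose I(Z';Y) ≤ I(Z;Y). Then the JEMMIG score satisfies 0 ≤ H(Z,Y) − I(Z;Y) + I(Z';Y) ≤ H(Y) + log N. -/
open Finset

/-- The distribution (pmf) of a random variable `f` on a finite sample space with pmf `p`. -/
noncomputable def dist {Ω A : Type*} [Fintype Ω] [DecidableEq A]
    (p : Ω → ℝ) (f : Ω → A) (a : A) : ℝ :=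
  ∑ ω, if f ω = a then p ω else 0

/-- Shannon entropy of a random variable `f` (convention `0 · log 0 = 0`). -/
noncomputable def entropy {Ω A : Type*} [Fintype Ω] [Fintype A] [DecidableEq A]
    (p : Ω → ℝ) (f : Ω → A) : ℝ :=
  -∑ a, dist p f a * Real.log (dist p f a)

/-- Mutual information `I(f;g) = H(f) + H(g) − H(f,g)`. -/
noncomputable def mutualInfo {Ω A B : Type*} [Fintype Ω] [Fintype A] [Fintype B]
    [DecidableEq A] [DecidableEq B] (p : Ω → ℝ) (f : Ω → A) (g : Ω → B) : ℝ :=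
  entropy p f + entropy p g - entropy p (fun ω => (f ω, g ω))

/-- The conditional distribution of `f` given `h = c`. -/
noncomputable def condDist {Ω A C : Type*} [Fintype Ω] [DecidableEq A] [DecidableEq C]
    (p : Ω → ℝ) (f : Ω → A) (h : Ω → C) (c : C) (a : A) : ℝ :=
  (∑ ω, if f ω = a ∧ h ω = c then p ω else 0) / dist p h c

/-- The entropy of `f` conditioned on the event `h = c`. -/
noncomputable def condEntropy {Ω A C : Type*} [Fintype Ω] [Fintype A] [Fintype C]
    [DecidableEq A] [DecidableEq C] (p : Ω → ℝ) (f : Ω → A) (h : Ω → C) (c : C) : ℝ :=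
  -∑ a, condDist p f h c a * Real.log (condDist p f h c a)

/-- Conditional mutual information
`I(f;g | h) = ∑_c P(h=c) [H(f|h=c) + H(g|h=c) − H(f,g|h=c)]`. -/
noncomputable def condMutualInfo {Ω A B C : Type*} [Fintype Ω] [Fintype A] [Fintype B]
    [Fintype C] [DecidableEq A] [DecidableEq B] [DecidableEq C]
    (p : Ω → ℝ) (f : Ω → A) (g : Ω → B) (h : Ω → C) : ℝ :=
  ∑ c, dist p h c *
    (condEntropy p f h c + condEntropy p g h c
      - condEntropy p (fun ω => (f ω, g ω)) h c)

section Aux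

variable {Ω A B : Type*} [Fintype Ω] [Fintype A] [Fintype B] [DecidableEq A] [DecidableEq B]

omit [Fintype A] in
lemma dist_nonneg' (p : Ω → ℝ) (hp : ∀ ω, 0 ≤ p ω) (f : Ω → A) (a : A) :
    0 ≤ _root_.dist p f a :=
  Finset.sum_nonneg fun ω _ => by split <;> simp [hp ω]

lemma sum_dist (p : Ω → ℝ) (f : Ω → A) : ∑ a, _root_.dist p f a = ∑ ω, p ω := by
  unfold _root_.dist
  rw [Finset.sum_comm]
  simp

omit [Fintype A] in
lemma marginal_fst (p : Ω → ℝ) (f : Ω → A) (g : Ω → B) (a : A) :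
    ∑ b, _root_.dist p (fun ω => (f ω, g ω)) (a, b) = _root_.dist p f a := by
  unfold _root_.dist
  rw [Finset.sum_comm]
  refine Finset.sum_congr rfl fun ω _ => ?_
  simp [Prod.ext_iff]
  by_cases h : f ω = a <;> simp [h]

omit [Fintype B] in
lemma marginal_snd (p : Ω → ℝ) (f : Ω → A) (g : Ω → B) (b : B) :
    ∑ a, _root_.dist p (fun ω => (f ω, g ω)) (a, b) = _root_.dist p g b := by
  unfold _root_.dist
  rw [Finset.sum_comm]
  refine Finset.sum_congr rfl fun ω _ => ?_
  simp [Prod.ext_iff]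
  by_cases h : g ω = b <;> simp [h]

lemma dist_le_fst (p : Ω → ℝ) (hp : ∀ ω, 0 ≤ p ω) (f : Ω → A) (g : Ω → B) (a : A) (b : B) :
    _root_.dist p (fun ω => (f ω, g ω)) (a, b) ≤ _root_.dist p f a := by
  rw [← marginal_fst p f g a]
  exact Finset.single_le_sum
    (f := fun b' => _root_.dist p (fun ω => (f ω, g ω)) (a, b'))
    (fun b' _ => dist_nonneg' p hp _ _) (Finset.mem_univ b)

lemma dist_le_snd (p : Ω → ℝ) (hp : ∀ ω, 0 ≤ p ω) (f : Ω → A) (g : Ω → B) (a : A) (b : B) :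
    _root_.dist p (fun ω => (f ω, g ω)) (a, b) ≤ _root_.dist p g b := by
  rw [← marginal_snd p f g b]
  exact Finset.single_le_sum
    (f := fun a' => _root_.dist p (fun ω => (f ω, g ω)) (a', b))
    (fun a' _ => dist_nonneg' p hp _ _) (Finset.mem_univ a)

/-- Gibbs' inequality. -/
lemma gibbs {ι : Type*} [Fintype ι] (u v : ι → ℝ) (hu : ∀ i, 0 ≤ u i) (hv : ∀ i, 0 ≤ v i)
    (habs : ∀ i, v i = 0 → u i = 0) (hsum : ∑ i, v i ≤ ∑ i, u i) :
    ∑ i, u i * Real.log (v i) ≤ ∑ i, u i * Real.log (u i) := by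
  have key : ∀ i, u i * Real.log (v i) - u i * Real.log (u i) ≤ v i - u i := by
    intro i
    rcases eq_or_lt_of_le (hu i) with h0 | h0
    · simp [← h0, hv i]
    · have hvpos : 0 < v i := (hv i).lt_of_ne fun h => by
        have := habs i h.symm; linarith
      have hlog : Real.log (v i) - Real.log (u i) = Real.log (v i / u i) := by
        rw [Real.log_div hvpos.ne' h0.ne']
      have hle := Real.log_le_sub_one_of_pos (div_pos hvpos h0)
      calc u i * Real.log (v i) - u i * Real.log (u i)
          = u i * Real.log (v i / u i) := by rw [← hlog]; ring
        _ ≤ u i * (v i / u i - 1) := mul_le_mul_of_nonneg_left hle (hu i)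
        _ = v i - u i := by field_simp
  have h1 : ∑ i, (u i * Real.log (v i) - u i * Real.log (u i)) ≤ ∑ i, (v i - u i) :=
    Finset.sum_le_sum (fun i _ => key i)
  rw [Finset.sum_sub_distrib, Finset.sum_sub_distrib] at h1
  linarith

/-- `H(g) ≤ H(f,g)`. -/
lemma entropy_snd_le_pair (p : Ω → ℝ) (hp : ∀ ω, 0 ≤ p ω) (f : Ω → A) (g : Ω → B) :
    entropy p g ≤ entropy p (fun ω => (f ω, g ω)) := by
  unfold entropy
  rw [Fintype.sum_prod_type, Finset.sum_comm, neg_le_neg_iff]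
  calc ∑ b, ∑ a, _root_.dist p (fun ω => (f ω, g ω)) (a, b)
          * Real.log (_root_.dist p (fun ω => (f ω, g ω)) (a, b))
      ≤ ∑ b, ∑ a, _root_.dist p (fun ω => (f ω, g ω)) (a, b) * Real.log (_root_.dist p g b) := by
        refine Finset.sum_le_sum fun b _ => Finset.sum_le_sum fun a _ => ?_
        rcases eq_or_lt_of_le (dist_nonneg' p hp (fun ω => (f ω, g ω)) (a, b)) with h0 | h0
        · rw [← h0]; simp
        · exact mul_le_mul_of_nonneg_left
            (Real.log_le_log h0 (dist_le_snd p hp f g a b)) (le_of_lt h0)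
    _ = ∑ b, _root_.dist p g b * Real.log (_root_.dist p g b) := by
        refine Finset.sum_congr rfl fun b _ => ?_
        rw [← Finset.sum_mul, marginal_snd]

/-- `H(f) ≤ H(f,g)`. -/
lemma entropy_fst_le_pair (p : Ω → ℝ) (hp : ∀ ω, 0 ≤ p ω) (f : Ω → A) (g : Ω → B) :
    entropy p f ≤ entropy p (fun ω => (f ω, g ω)) := by
  unfold entropy
  rw [Fintype.sum_prod_type, neg_le_neg_iff]
  calc ∑ a, ∑ b, _root_.dist p (fun ω => (f ω, g ω)) (a, b)
          * Real.log (_root_.dist p (fun ω => (f ω, g ω)) (a, b))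
      ≤ ∑ a, ∑ b, _root_.dist p (fun ω => (f ω, g ω)) (a, b) * Real.log (_root_.dist p f a) := by
        refine Finset.sum_le_sum fun a _ => Finset.sum_le_sum fun b _ => ?_
        rcases eq_or_lt_of_le (dist_nonneg' p hp (fun ω => (f ω, g ω)) (a, b)) with h0 | h0
        · rw [← h0]; simp
        · exact mul_le_mul_of_nonneg_left
            (Real.log_le_log h0 (dist_le_fst p hp f g a b)) (le_of_lt h0)
    _ = ∑ a, _root_.dist p f a * Real.log (_root_.dist p f a) := by
        refine Finset.sum_congr rfl fun a _ => ?_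
        rw [← Finset.sum_mul, marginal_fst]

/-- Subadditivity: `H(f,g) ≤ H(f) + H(g)`, i.e. `I(f;g) ≥ 0`. -/
lemma entropy_pair_le_add (p : Ω → ℝ) (hp : ∀ ω, 0 ≤ p ω) (hpsum : ∑ ω, p ω = 1)
    (f : Ω → A) (g : Ω → B) :
    entropy p (fun ω => (f ω, g ω)) ≤ entropy p f + entropy p g := by
  set q := _root_.dist p (fun ω => (f ω, g ω)) with hq
  have hgibbs := gibbs (ι := A × B) q (fun ab => _root_.dist p f ab.1 * _root_.dist p g ab.2)
    (fun ab => dist_nonneg' p hp _ _)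
    (fun ab => mul_nonneg (dist_nonneg' p hp _ _) (dist_nonneg' p hp _ _))
    (fun ab h => by
      rcases mul_eq_zero.mp h with h | h
      · exact le_antisymm (h ▸ dist_le_fst p hp f g ab.1 ab.2) (dist_nonneg' p hp _ _)
      · exact le_antisymm (h ▸ dist_le_snd p hp f g ab.1 ab.2) (dist_nonneg' p hp _ _))
    (by
      have hf : ∑ a, _root_.dist p f a = 1 := by rw [sum_dist, hpsum]
      have hg : ∑ b, _root_.dist p g b = 1 := by rw [sum_dist, hpsum]
      rw [Fintype.sum_prod_type, sum_dist, hpsum]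
      rw [show (∑ a, ∑ b, _root_.dist p f a * _root_.dist p g b)
        = ∑ a, _root_.dist p f a * ∑ b, _root_.dist p g b from
          Finset.sum_congr rfl fun a _ => (Finset.mul_sum _ _ _).symm, hg]
      simp [hf])
  have hsplit : ∑ ab : A × B, q ab * Real.log (_root_.dist p f ab.1 * _root_.dist p g ab.2)
      = ∑ ab : A × B, (q ab * Real.log (_root_.dist p f ab.1) + q ab * Real.log (_root_.dist p g ab.2)) := by
    refine Finset.sum_congr rfl fun ab _ => ?_
    rcases eq_or_lt_of_le (dist_nonneg' p hp (fun ω => (f ω, g ω)) ab) with h0 | h0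
    · have hz : q ab = 0 := by rw [hq]; exact h0.symm
      simp [hz]
    · have h1 : 0 < _root_.dist p f ab.1 :=
        lt_of_lt_of_le h0 (by simpa using dist_le_fst p hp f g ab.1 ab.2)
      have h2 : 0 < _root_.dist p g ab.2 :=
        lt_of_lt_of_le h0 (by simpa using dist_le_snd p hp f g ab.1 ab.2)
      rw [Real.log_mul h1.ne' h2.ne', mul_add]
  rw [hsplit, Finset.sum_add_distrib] at hgibbs
  have e1 : ∑ ab : A × B, q ab * Real.log (_root_.dist p f ab.1)
      = ∑ a, _root_.dist p f a * Real.log (_root_.dist p f a) := by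
    rw [Fintype.sum_prod_type]
    refine Finset.sum_congr rfl fun a _ => ?_
    simp_rw [← Finset.sum_mul]
    rw [hq, marginal_fst]
  have e2 : ∑ ab : A × B, q ab * Real.log (_root_.dist p g ab.2)
      = ∑ b, _root_.dist p g b * Real.log (_root_.dist p g b) := by
    rw [Fintype.sum_prod_type, Finset.sum_comm]
    refine Finset.sum_congr rfl fun b _ => ?_
    simp_rw [← Finset.sum_mul]
    rw [hq, marginal_snd]
  rw [e1, e2] at hgibbs
  unfold entropy
  linarith

/-- Maximum entropy bound: `H(f) ≤ log |A|`. -/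
lemma entropy_le_log_card (p : Ω → ℝ) (hp : ∀ ω, 0 ≤ p ω) (hpsum : ∑ ω, p ω = 1)
    (f : Ω → A) (hA : 1 ≤ Fintype.card A) :
    entropy p f ≤ Real.log (Fintype.card A) := by
  have hcard : (0 : ℝ) < (Fintype.card A : ℝ) := by exact_mod_cast hA
  have hgibbs := gibbs (ι := A) (_root_.dist p f) (fun _ => ((Fintype.card A : ℝ))⁻¹)
    (fun a => dist_nonneg' p hp f a)
    (fun a => by positivity)
    (fun a h => absurd h (by positivity))
    (by rw [sum_dist, hpsum, Finset.sum_const, Finset.card_univ, nsmul_eq_mul,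
          mul_inv_cancel₀ hcard.ne'])
  have : ∑ a, _root_.dist p f a * Real.log ((Fintype.card A : ℝ))⁻¹
      = -Real.log (Fintype.card A) := by
    rw [← Finset.sum_mul, sum_dist, hpsum, one_mul, Real.log_inv]
  rw [this] at hgibbs
  unfold entropy
  linarith

end Aux

/-- The JEMMIG score `H(Z,Y) − I(Z;Y) + I(Z';Y)` lies in
`[0, H(Y) + log N]`, where `N` is the cardinality of the value type of `Z`. -/
theorem jemmig_bounds
    {Ω A A' B : Type*} [Fintype Ω] [Fintype A] [Fintype A'] [Fintype B]
    [DecidableEq A] [DecidableEq A'] [DecidableEq B]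
    (p : Ω → ℝ) (hp : ∀ ω, 0 ≤ p ω) (hpsum : ∑ ω, p ω = 1)
    (Y : Ω → B) (Z : Ω → A) (Z' : Ω → A')
    (N : ℕ) (hN : Fintype.card A = N) (hN1 : 1 ≤ N)
    (hle : mutualInfo p Z' Y ≤ mutualInfo p Z Y) :
    0 ≤ entropy p (fun ω => (Z ω, Y ω)) - mutualInfo p Z Y + mutualInfo p Z' Y ∧
      entropy p (fun ω => (Z ω, Y ω)) - mutualInfo p Z Y + mutualInfo p Z' Y
        ≤ entropy p Y + Real.log N := by
  have hI' : 0 ≤ mutualInfo p Z' Y := by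
    have := entropy_pair_le_add p hp hpsum Z' Y
    unfold mutualInfo
    linarith
  have h1 := entropy_fst_le_pair p hp Z Y
  have h2 := entropy_snd_le_pair p hp Z Y
  have h3 := entropy_pair_le_add p hp hpsum Z Y
  have h4 : entropy p Z ≤ Real.log N := by
    have := entropy_le_log_card p hp hpsum Z (hN ▸ hN1)
    rwa [hN] at this
  constructor
  · unfold mutualInfo at *
    linarith
  · unfold mutualInfo at *
    linarith
end

section
/- Let X be a random variable and Z = (Z₁, …, Z_L) a tuple of random variables, all taking values in finite types on a common probability space with a joint probability mass function. Suppose (i) Z₁, …, Z_L are mutually independent, and (ii) Z₁, …, Z_L are mutually conditionally independent given X. Then I(X;Z) = ∑_{i=1}^{L} I(X;Z_i). -/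
open Finset

lemma my_dist_nonneg {Ω A : Type*} [Fintype Ω] [DecidableEq A] (p : Ω → ℝ) (hp : ∀ ω, 0 ≤ p ω) (f : Ω → A) (a : A) :
    0 ≤ _root_.dist p f a :=
  Finset.sum_nonneg fun ω _ => by split <;> simp [hp ω]

lemma my_sum_dist {Ω A : Type*} [Fintype Ω] [DecidableEq A] [Fintype A] (p : Ω → ℝ) (f : Ω → A) :
    ∑ a, _root_.dist p f a = ∑ ω, p ω := by
  simp only [_root_.dist]
  rw [Finset.sum_comm]
  exact Finset.sum_congr rfl fun ω _ => by simp

lemma my_sum_condDist {Ω A C : Type*} [Fintype Ω] [DecidableEq A] [DecidableEq C] [Fintype A] (p : Ω → ℝ) (f : Ω → A) (h : Ω → C) (c : C)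
    (hc : _root_.dist p h c ≠ 0) : ∑ a, condDist p f h c a = 1 := by
  simp only [condDist, ← Finset.sum_div]
  rw [Finset.sum_comm]
  have : ∀ ω ∈ (univ : Finset Ω),
      (∑ a, if f ω = a ∧ h ω = c then p ω else 0) = if h ω = c then p ω else 0 := by
    intro ω _
    by_cases hh : h ω = c <;> simp [hh]
  rw [Finset.sum_congr rfl this]
  exact div_self hc

lemma joint_eq_dist_mul_condDist {Ω A C : Type*} [Fintype Ω] [DecidableEq A] [DecidableEq C] (p : Ω → ℝ) (hp : ∀ ω, 0 ≤ p ω) (f : Ω → A)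
    (h : Ω → C) (c : C) (a : A) :
    (∑ ω, if f ω = a ∧ h ω = c then p ω else 0)
      = _root_.dist p h c * condDist p f h c a := by
  rcases eq_or_ne (_root_.dist p h c) 0 with h0 | h0
  · rw [h0, zero_mul]
    have hle : (∑ ω, if f ω = a ∧ h ω = c then p ω else 0)
        ≤ _root_.dist p h c := by
      apply Finset.sum_le_sum
      intro ω _
      by_cases hh : h ω = c
      · by_cases hf : f ω = a <;> simp [hh, hf, hp ω]
      · simp [hh]
    have hge : 0 ≤ (∑ ω, if f ω = a ∧ h ω = c then p ω else 0) :=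
      Finset.sum_nonneg fun ω _ => by split <;> simp [hp ω]
    rw [h0] at hle
    linarith
  · rw [condDist, mul_div_cancel₀ _ h0]

/-- Chain rule: `H(h, f) = H(h) + ∑_c P(h=c) H(f | h=c)`. -/
lemma chain_rule {Ω A C : Type*} [Fintype Ω] [DecidableEq A] [DecidableEq C] [Fintype A] [Fintype C] (p : Ω → ℝ) (hp : ∀ ω, 0 ≤ p ω)
    (h : Ω → C) (f : Ω → A) :
    entropy p (fun ω => (h ω, f ω))
      = entropy p h + ∑ c, _root_.dist p h c * condEntropy p f h c := by
  have key : ∀ x : C × A, _root_.dist p (fun ω => (h ω, f ω)) x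
      = _root_.dist p h x.1 * condDist p f h x.1 x.2 := by
    rintro ⟨c, a⟩
    rw [← joint_eq_dist_mul_condDist p hp f h c a]
    simp only [_root_.dist, Prod.mk.injEq]
    exact Finset.sum_congr rfl fun ω _ => if_congr and_comm rfl rfl
  simp only [entropy, key]
  rw [Fintype.sum_prod_type]
  have main : ∀ c, (∑ a, _root_.dist p h c * condDist p f h c a *
      Real.log (_root_.dist p h c * condDist p f h c a))
      = _root_.dist p h c * Real.log (_root_.dist p h c)
        - _root_.dist p h c * condEntropy p f h c := by
    intro c
    rcases eq_or_ne (_root_.dist p h c) 0 with h0 | h0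
    · simp [h0]
    · have hterm : ∀ a, _root_.dist p h c * condDist p f h c a *
          Real.log (_root_.dist p h c * condDist p f h c a)
          = _root_.dist p h c * condDist p f h c a * Real.log (_root_.dist p h c)
            + _root_.dist p h c * (condDist p f h c a * Real.log (condDist p f h c a)) := by
        intro a
        rcases eq_or_ne (condDist p f h c a) 0 with hq | hq
        · simp [hq]
        · rw [Real.log_mul h0 hq]; ring
      rw [Finset.sum_congr rfl fun a _ => hterm a, Finset.sum_add_distrib,
        ← Finset.sum_mul, ← Finset.mul_sum, ← Finset.mul_sum,
        my_sum_condDist p f h c h0, condEntropy]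
      ring
  rw [Finset.sum_congr rfl fun c _ => main c, Finset.sum_sub_distrib]
  ring

/-- Entropy of a product distribution is the sum of entropies. -/
lemma prod_entropy_sum {L : ℕ} {B : Fin L → Type*} [∀ i, Fintype (B i)]
    (q : ∀ i, B i → ℝ) (hq1 : ∀ i, ∑ x, q i x = 1) :
    ∑ b : ∀ i, B i, (∏ i, q i (b i)) * Real.log (∏ i, q i (b i))
      = ∑ i, ∑ x, q i x * Real.log (q i x) := by
  have step1 : ∀ b : ∀ i, B i, (∏ i, q i (b i)) * Real.log (∏ i, q i (b i))
      = ∑ i, (∏ j, q j (b j)) * Real.log (q i (b i)) := by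
    intro b
    by_cases hz : ∀ i, q i (b i) ≠ 0
    · rw [Real.log_prod (fun i _ => hz i), Finset.mul_sum]
    · push_neg at hz
      obtain ⟨i, hi⟩ := hz
      have hzero : ∏ j, q j (b j) = 0 := Finset.prod_eq_zero (mem_univ i) hi
      simp [hzero]
  rw [Finset.sum_congr rfl fun b _ => step1 b, Finset.sum_comm]
  refine Finset.sum_congr rfl fun i _ => ?_
  set r : ∀ j, B j → ℝ :=
    fun j => if hj : j = i then (fun x => q j x * Real.log (q j x)) else q j with hr
  have hprod : ∀ b : ∀ j, B j,
      (∏ j, q j (b j)) * Real.log (q i (b i)) = ∏ j, r j (b j) := by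
    intro b
    rw [← Finset.mul_prod_erase univ (fun j => r j (b j)) (mem_univ i),
      ← Finset.mul_prod_erase univ (fun j => q j (b j)) (mem_univ i)]
    have h1 : r i (b i) = q i (b i) * Real.log (q i (b i)) := by simp [hr]
    have h2 : (∏ j ∈ univ.erase i, r j (b j)) = ∏ j ∈ univ.erase i, q j (b j) :=
      Finset.prod_congr rfl fun j hj => by simp [hr, (Finset.mem_erase.1 hj).1]
    rw [h1, h2]; ring
  rw [Finset.sum_congr rfl fun b _ => hprod b, ← Fintype.piFinset_univ,
    ← Finset.prod_univ_sum, ← Finset.mul_prod_erase univ _ (mem_univ i)]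
  have hone : (∏ j ∈ univ.erase i, ∑ x, r j x) = 1 :=
    Finset.prod_eq_one fun j hj => by
      simp [hr, (Finset.mem_erase.1 hj).1, hq1 j]
  rw [hone, mul_one]
  simp [hr]


/-- If the latents `Z₁, …, Z_L` are mutually independent and also mutually
conditionally independent given `X`, then `I(X;Z) = ∑ᵢ I(X;Zᵢ)`. -/
theorem mutualInfo_joint_eq_sum_of_indep
    {Ω A : Type*} {L : ℕ} {B : Fin L → Type*}
    [Fintype Ω] [Fintype A] [DecidableEq A]
    [∀ i, Fintype (B i)] [∀ i, DecidableEq (B i)]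
    (p : Ω → ℝ) (hp : ∀ ω, 0 ≤ p ω) (hpsum : ∑ ω, p ω = 1)
    (X : Ω → A) (Z : ∀ i, Ω → B i)
    (hindep : ∀ b : ∀ i, B i,
      dist p (fun ω i => Z i ω) b = ∏ i, dist p (Z i) (b i))
    (hcondindep : ∀ a, 0 < dist p X a → ∀ b : ∀ i, B i,
      condDist p (fun ω i => Z i ω) X a b = ∏ i, condDist p (Z i) X a (b i)) :
    mutualInfo p X (fun ω i => Z i ω) = ∑ i, mutualInfo p X (Z i) := by
  -- entropy of the tuple splits
  have hE : entropy p (fun ω i => Z i ω) = ∑ i, entropy p (Z i) := by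
    rw [entropy, Finset.sum_congr rfl fun b _ => by rw [hindep b],
      prod_entropy_sum _ (fun i => by rw [my_sum_dist]; exact hpsum)]
    simp [entropy, Finset.sum_neg_distrib]
  -- conditional entropy of the tuple splits
  have hCE : ∀ a, dist p X a ≠ 0 →
      condEntropy p (fun ω i => Z i ω) X a = ∑ i, condEntropy p (Z i) X a := by
    intro a ha
    have hapos : 0 < dist p X a := lt_of_le_of_ne (my_dist_nonneg p hp X a) (Ne.symm ha)
    rw [condEntropy, Finset.sum_congr rfl fun b _ => by rw [hcondindep a hapos b],
      prod_entropy_sum _ (fun i => my_sum_condDist p (Z i) X a ha)]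
    simp [condEntropy, Finset.sum_neg_distrib]
  have hca : ∀ a, dist p X a * condEntropy p (fun ω i => Z i ω) X a
      = ∑ i, dist p X a * condEntropy p (Z i) X a := by
    intro a
    rcases eq_or_ne (dist p X a) 0 with h0 | h0
    · simp [h0]
    · rw [hCE a h0, Finset.mul_sum]
  rw [mutualInfo, chain_rule p hp X (fun ω i => Z i ω), hE,
    Finset.sum_congr rfl fun a _ => hca a, Finset.sum_comm]
  have : ∀ i, mutualInfo p X (Z i)
      = entropy p (Z i) - ∑ a, dist p X a * condEntropy p (Z i) X a := by
    intro i
    rw [mutualInfo, chain_rule p hp X (Z i)]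
    ring
  rw [Finset.sum_congr rfl fun i _ => this i, Finset.sum_sub_distrib]
  ring
end
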